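/- If the third multirelation is union-closed, Peleg composition is associative: for any multirelations R ⊆ X × ℘(Y), S ⊆ Y × ℘(Z) and any union-closed T ⊆ Z × ℘(W), (R ∗ S) ∗ T = R ∗ (S ∗ T). -/
import Mathlib


open Set

/-- Ordinary relational composition. -/
def relComp {A B C : Type*} (R : Set (A × B)) (S : Set (B × C)) : Set (A × C) :=
  {p | ∃ b, (p.1, b) ∈ R ∧ (b, p.2) ∈ S}

/-- Kleisli composition of multirelations. -/
def kleisliComp {X Y Z : Type*} (R : Set (X × Set Y)) (S : Set (Y × Set Z)) :
    Set (X × Set Z) :=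
  {p | ∃ B, (p.1, B) ∈ R ∧ p.2 = ⋃₀ {C | ∃ b ∈ B, (b, C) ∈ S}}

/-- Kleisli lifting of a multirelation. -/
def kleisliLift {Y Z : Type*} (S : Set (Y × Set Z)) : Set (Set Y × Set Z) :=
  {p | p.2 = ⋃₀ {C | ∃ b ∈ p.1, (b, C) ∈ S}}

/-- Parikh lifting of a multirelation. -/
def parikhLift {Y Z : Type*} (S : Set (Y × Set Z)) : Set (Set Y × Set Z) :=
  {p | ∀ b ∈ p.1, (b, p.2) ∈ S}

/-- Parikh composition of multirelations. -/
def parikhComp {X Y Z : Type*} (R : Set (X × Set Y)) (S : Set (Y × Set Z)) :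
    Set (X × Set Z) :=
  {p | ∃ B, (p.1, B) ∈ R ∧ ∀ b ∈ B, (b, p.2) ∈ S}

/-- Peleg composition of multirelations. -/
def pelegComp {X Y Z : Type*} (R : Set (X × Set Y)) (S : Set (Y × Set Z)) :
    Set (X × Set Z) :=
  {p | ∃ B, (p.1, B) ∈ R ∧
    ∃ f : Y → Set Z, (∀ b ∈ B, (b, f b) ∈ S) ∧ p.2 = ⋃ b ∈ B, f b}

/-- Peleg lifting of a multirelation. -/
def pelegLift {Y Z : Type*} (S : Set (Y × Set Z)) : Set (Set Y × Set Z) :=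
  {p | ∃ f : Y → Set Z, (∀ b ∈ p.1, (b, f b) ∈ S) ∧ p.2 = ⋃ b ∈ p.1, f b}

/-- The singleton map 1_Y = {(y,{y})}. -/
def singletonMap (Y : Type*) : Set (Y × Set Y) := {p | p.2 = {p.1}}

/-- Converse of the membership relation: {(y,A) | y ∈ A}. -/
def memConv (Y : Type*) : Set (Y × Set Y) := {p | p.1 ∈ p.2}

/-- The inclusion relation Ξ on the powerset. -/
def inclRel (Z : Type*) : Set (Set Z × Set Z) := {p | p.1 ⊆ p.2}

/-- Up-closed multirelations. -/
def upClosed {X Y : Type*} (R : Set (X × Set Y)) : Prop :=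
  ∀ a B C, (a, B) ∈ R → B ⊆ C → (a, C) ∈ R

/-- Univalent relations (partial functions). -/
def isUnivalent {A B : Type*} (f : Set (A × B)) : Prop :=
  ∀ x y y', (x, y) ∈ f → (x, y') ∈ f → y = y'

/-- Domain of a relation. -/
def relDom {A B : Type*} (f : Set (A × B)) : Set A := {x | ∃ y, (x, y) ∈ f}

/-- Union-closed multirelations. -/
def unionClosed {Z W : Type*} (T : Set (Z × Set W)) : Prop :=
  ∀ z (𝔅 : Set (Set W)), 𝔅.Nonempty → (∀ B ∈ 𝔅, (z, B) ∈ T) → (z, ⋃₀ 𝔅) ∈ T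

theorem peleg_assoc_of_unionClosed {X Y Z W : Type*} (R : Set (X × Set Y))
    (S : Set (Y × Set Z)) (T : Set (Z × Set W)) (hT : unionClosed T) :
    pelegComp (pelegComp R S) T = pelegComp R (pelegComp S T) := by
  ext ⟨a, A⟩
  simp only [pelegComp, Set.mem_setOf_eq]
  constructor
  · rintro ⟨C, ⟨B, hB, f, hf, rfl⟩, g, hg, rfl⟩
    refine ⟨B, hB, fun b => ⋃ c ∈ f b, g c, fun b hb => ?_, ?_⟩
    · exact ⟨f b, hf b hb, g, fun c hc => hg c (Set.mem_biUnion hb hc), rfl⟩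
    · ext w
      simp only [Set.mem_iUnion]
      constructor
      · rintro ⟨c, ⟨b, hb, hc⟩, hw⟩
        exact ⟨b, hb, c, hc, hw⟩
      · rintro ⟨b, hb, c, hc, hw⟩
        exact ⟨c, ⟨b, hb, hc⟩, hw⟩
  · rintro ⟨B, hB, h, hh, rfl⟩
    have hh' : ∀ b, b ∈ B → ∃ D, (b, D) ∈ S ∧
        ∃ g : Z → Set W, (∀ c ∈ D, (c, g c) ∈ T) ∧ h b = ⋃ c ∈ D, g c := hh
    choose D hD g hg hEq using hh'
    refine ⟨_, ⟨B, hB, fun b => ⋃ hb : b ∈ B, D b hb,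
      fun b hb => ?_, rfl⟩,
      fun c => ⋃₀ {E | ∃ b, ∃ hb : b ∈ B, c ∈ D b hb ∧ E = g b hb c}, ?_, ?_⟩
    · show (b, ⋃ hb : b ∈ B, D b hb) ∈ S
      have : (⋃ hb : b ∈ B, D b hb) = D b hb := by
        ext z; simp [hb]
      rw [this]; exact hD b hb
    · intro c hc
      simp only [Set.mem_iUnion] at hc
      obtain ⟨b, -, hb, hcb⟩ := hc
      exact hT c _ ⟨g b hb c, b, hb, hcb, rfl⟩ (by rintro E ⟨b2, hb2, hcb2, rfl⟩; exact hg b2 hb2 c hcb2)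
    · ext w
      simp only [Set.mem_iUnion, Set.mem_sUnion, Set.mem_setOf_eq]
      constructor
      · rintro ⟨b, hb, hw⟩
        rw [hEq b hb] at hw
        simp only [Set.mem_iUnion] at hw
        obtain ⟨c, hc, hw⟩ := hw
        exact ⟨c, ⟨b, hb, hb, hc⟩, _, ⟨b, hb, hc, rfl⟩, hw⟩
      · rintro ⟨c, -, E, ⟨b, hb, hc, rfl⟩, hw⟩
        refine ⟨b, hb, ?_⟩
        rw [hEq b hb]
        simp only [Set.mem_iUnion]
        exact ⟨c, hc, hw⟩
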